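/- Let E : X → ℝ ∪ {+∞} be K-geodesically convex on a metric space. Then the descending slope admits the representation |∂⁻E|(x) = sup_{y ≠ x} ( E(x) − E(y) + (K/2) d²(x,y) )⁺ / d(x,y) for every x ∈ D(E). -/

import Mathlib

open Filter Topology MeasureTheory Set Metric
open scoped ENNReal NNReal

open Classical in
/-- The descending slope `|∂⁻E|(x) = limsup_{y→x} (E(y)−E(x))⁻ / d(x,y)` of a functional
(valued in `ℝ ∪ {+∞}`), set to `+∞` outside the effective domain. -/
noncomputable def descendingSlope {X : Type*} [MetricSpace X] (E : X → EReal) (x : X) : ℝ≥0∞ :=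
  if E x = ⊤ then ⊤
  else Filter.limsup (fun y => ENNReal.ofReal ((E x - E y).toReal / dist x y)) (𝓝[≠] x)

/-- `E` is `K`-geodesically convex: any two points of the effective domain are joined by a
constant-speed geodesic along which
`E(γ_t) ≤ (1−t)E(γ_0) + tE(γ_1) − (K/2)t(1−t)d²(γ_0,γ_1)`. -/
def KGeodConvex {X : Type*} [MetricSpace X] (K : ℝ) (E : X → EReal) : Prop :=
  ∀ x y : X, E x ≠ ⊤ → E y ≠ ⊤ → ∃ γ : ℝ → X, γ 0 = x ∧ γ 1 = y ∧
    (∀ t ∈ Icc (0:ℝ) 1, ∀ s ∈ Icc (0:ℝ) 1, dist (γ t) (γ s) = |s - t| * dist x y) ∧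
    ∀ t ∈ Icc (0:ℝ) 1,
      E (γ t) ≤ ((1 - t : ℝ) : EReal) * E x + (t : EReal) * E y
        - (((K / 2) * t * (1 - t) * dist x y ^ 2 : ℝ) : EReal)

/-- Representation of the descending slope of a `K`-geodesically convex functional:
`|∂⁻E|(x) = sup_{y ≠ x} (E(x) − E(y) + (K/2)d²(x,y))⁺ / d(x,y)` for every `x ∈ D(E)`. -/
theorem descendingSlope_eq_sup_of_KGeodConvex {X : Type*} [MetricSpace X]
    (K : ℝ) (E : X → EReal) (hbot : ∀ x, E x ≠ ⊥) (hconv : KGeodConvex K E)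
    (x : X) (hx : E x ≠ ⊤) :
    descendingSlope E x = ⨆ (y : X) (_ : y ≠ x),
      ENNReal.ofReal ((E x - E y + (((K / 2) * dist x y ^ 2 : ℝ) : EReal)).toReal / dist x y) := by
  have hxb := hbot x
  set ex := (E x).toReal with hex_def
  have hex : E x = (ex : EReal) := (EReal.coe_toReal hx hxb).symm
  rw [descendingSlope, if_neg hx]
  set f : X → ℝ≥0∞ := fun y => ENNReal.ofReal ((E x - E y).toReal / dist x y) with hf
  apply le_antisymm
  · -- limsup ≤ sup
    set S := ⨆ (y : X) (_ : y ≠ x),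
      ENNReal.ofReal ((E x - E y + (((K / 2) * dist x y ^ 2 : ℝ) : EReal)).toReal / dist x y)
      with hS
    apply ENNReal.le_of_forall_pos_le_add
    intro ε hε _
    have hδ : (0:ℝ) < ε / (|K|/2 + 1) := by positivity
    have hev : ∀ᶠ y in 𝓝[≠] x, f y ≤ S + ε := by
      have h1 : ∀ᶠ y in 𝓝[≠] x, dist x y < ε / (|K|/2 + 1) := by
        have h0 : ∀ᶠ y in 𝓝 x, dist x y < ε / (|K|/2 + 1) := by
          filter_upwards [Metric.ball_mem_nhds x hδ] with y hy
          rw [dist_comm]; exact hy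
        exact h0.filter_mono nhdsWithin_le_nhds
      have h2 : ∀ᶠ y in 𝓝[≠] x, y ≠ x := eventually_mem_nhdsWithin
      filter_upwards [h1, h2] with y hy hyx
      by_cases hyt : E y = ⊤
      · have : f y = 0 := by simp [hf, hex, hyt, EReal.sub_top]
        simp [this]
      · have hyb := hbot y
        set ey := (E y).toReal with hey_def
        have hey : E y = (ey : EReal) := (EReal.coe_toReal hyt hyb).symm
        have hd0 : 0 < dist x y := dist_pos.2 (Ne.symm hyx)
        set d := dist x y with hd
        have key : (ex - ey) / d ≤ (ex - ey + K/2 * d^2)/d + |K|/2 * d := by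
          have h3 : K/2 * d^2 / d = K/2 * d := by
            field_simp
          rw [add_div, h3]
          nlinarith [neg_abs_le K, hd0]
        have hterm : (E x - E y + ((K / 2 * dist x y ^ 2 : ℝ):EReal)).toReal
            = ex - ey + K/2 * d^2 := by
          rw [hex, hey, ← EReal.coe_sub, ← EReal.coe_add, EReal.toReal_coe]
        calc f y = ENNReal.ofReal ((ex - ey)/d) := by
              rw [hf]; simp only []
              rw [hex, hey, ← EReal.coe_sub, EReal.toReal_coe]
          _ ≤ ENNReal.ofReal ((ex - ey + K/2*d^2)/d + |K|/2*d) :=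
              ENNReal.ofReal_le_ofReal key
          _ ≤ ENNReal.ofReal ((ex - ey + K/2*d^2)/d) + ENNReal.ofReal (|K|/2*d) :=
              ENNReal.ofReal_add_le
          _ ≤ S + ε := by
              gcongr
              · exact le_iSup₂_of_le y hyx (le_of_eq (by rw [hterm]))
              · rw [← ENNReal.ofReal_coe_nnreal]
                apply ENNReal.ofReal_le_ofReal
                have hK : (0:ℝ) ≤ |K|/2 := by positivity
                have h4 : |K|/2 * d ≤ |K|/2 * (ε / (|K|/2 + 1)) := by
                  apply mul_le_mul_of_nonneg_left hy.le hK
                have h5 : |K|/2 * (ε / (|K|/2 + 1)) ≤ ε := by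
                  have h6 : (0:ℝ) < |K|/2 + 1 := by positivity
                  rw [mul_comm, div_mul_eq_mul_div, div_le_iff₀ h6]
                  nlinarith [hK, ε.coe_nonneg]
                linarith
    exact Filter.limsup_le_of_le (by isBoundedDefault) hev
  · -- sup ≤ limsup
    apply iSup₂_le
    intro y hyx
    by_cases hyt : E y = ⊤
    · have : E x - E y + ((K / 2 * dist x y ^ 2 : ℝ):EReal) = ⊥ := by
        rw [hyt, EReal.sub_top, EReal.bot_add]
      rw [this]
      simp
    · have hyb := hbot y
      have hd0 : 0 < dist x y := dist_pos.2 (Ne.symm hyx)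
      set d := dist x y with hd
      set ey := (E y).toReal with hey_def
      have hey : E y = (ey : EReal) := (EReal.coe_toReal hyt hyb).symm
      obtain ⟨γ, hγ0, hγ1, hγd, hγE⟩ := hconv x y hx hyt
      set r := ex - ey with hr
      have hterm : (E x - E y + ((K / 2 * d ^ 2 : ℝ):EReal)).toReal = r + K/2 * d^2 := by
        rw [hex, hey, ← EReal.coe_sub, ← EReal.coe_add, EReal.toReal_coe]
      rw [hterm]
      set L := ENNReal.ofReal ((r + K/2*d^2)/d) with hL
      have hmem : Ioo (0:ℝ) 1 ∈ 𝓝[>] (0:ℝ) := Ioo_mem_nhdsGT_of_mem ⟨le_refl 0, one_pos⟩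
      have hdist : ∀ t ∈ Ioo (0:ℝ) 1, dist x (γ t) = t * d := by
        intro t ht
        have h7 := hγd 0 ⟨le_refl 0, zero_le_one⟩ t ⟨ht.1.le, ht.2.le⟩
        rw [hγ0] at h7
        rw [hd, h7, sub_zero, abs_of_pos ht.1]
      have htend : Tendsto γ (𝓝[>] (0:ℝ)) (𝓝[≠] x) := by
        rw [tendsto_nhdsWithin_iff]
        constructor
        · rw [tendsto_iff_dist_tendsto_zero]
          have hmul : Tendsto (fun t : ℝ => t * d) (𝓝[>] (0:ℝ)) (𝓝 0) := by
            have := (continuous_mul_const d).tendsto (0:ℝ)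
            simpa using this.mono_left nhdsWithin_le_nhds
          apply hmul.congr'
          filter_upwards [hmem] with t ht
          rw [dist_comm]
          exact (hdist t ht).symm
        · filter_upwards [hmem] with t ht
          intro h
          have h8 := hdist t ht
          rw [h] at h8
          simp only [dist_self] at h8
          have : 0 < t * d := mul_pos ht.1 hd0
          rw [← h8] at this
          exact lt_irrefl 0 this
      have hlow : ∀ᶠ t in 𝓝[>] (0:ℝ),
          ENNReal.ofReal ((r + K/2*(1-t)*d^2)/d) ≤ f (γ t) := by
        filter_upwards [hmem] with t ht
        have hIcc : t ∈ Icc (0:ℝ) 1 := ⟨ht.1.le, ht.2.le⟩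
        have hE := hγE t hIcc
        have hrhs : ((1 - t : ℝ) : EReal) * E x + (t : EReal) * E y
            - ((K / 2 * t * (1-t) * d^2 : ℝ):EReal)
            = (((1-t)*ex + t*ey - K/2*t*(1-t)*d^2 : ℝ) : EReal) := by
          rw [hex, hey]; norm_cast
        rw [hrhs] at hE
        have hgt : E (γ t) ≠ ⊤ := by
          intro h
          rw [h] at hE
          exact (EReal.coe_ne_top _) (top_le_iff.1 hE)
        set et := (E (γ t)).toReal with het_def
        have het : E (γ t) = (et : EReal) := (EReal.coe_toReal hgt (hbot _)).symm
        rw [het] at hE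
        have hEr : et ≤ (1-t)*ex + t*ey - K/2*t*(1-t)*d^2 := EReal.coe_le_coe_iff.1 hE
        have h9 : (E x - E (γ t)).toReal = ex - et := by
          rw [hex, het, ← EReal.coe_sub, EReal.toReal_coe]
        show ENNReal.ofReal ((r + K/2*(1-t)*d^2)/d)
          ≤ ENNReal.ofReal ((E x - E (γ t)).toReal / dist x (γ t))
        rw [h9, hdist t ht]
        apply ENNReal.ofReal_le_ofReal
        rw [div_le_div_iff₀ hd0 (mul_pos ht.1 hd0)]
        have hrr : r = ex - ey := hr
        nlinarith [ht.1, hd0, hEr, mul_pos ht.1 hd0]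
      have hLlim : Tendsto (fun t:ℝ => ENNReal.ofReal ((r + K/2*(1-t)*d^2)/d))
          (𝓝[>] (0:ℝ)) (𝓝 L) := by
        rw [hL]
        apply ENNReal.tendsto_ofReal
        have hc : Continuous (fun t:ℝ => (r + K/2*(1-t)*d^2)/d) := by fun_prop
        have := hc.tendsto 0
        simp only [sub_zero, mul_one] at this
        exact this.mono_left nhdsWithin_le_nhds
      calc L = liminf (fun t => ENNReal.ofReal ((r + K/2*(1-t)*d^2)/d)) (𝓝[>] (0:ℝ)) :=
            (hLlim.liminf_eq).symm
        _ ≤ liminf (fun t => f (γ t)) (𝓝[>] (0:ℝ)) := liminf_le_liminf hlow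
        _ ≤ limsup (fun t => f (γ t)) (𝓝[>] (0:ℝ)) := liminf_le_limsup
        _ = limsup f (map γ (𝓝[>] (0:ℝ))) := rfl
        _ ≤ limsup f (𝓝[≠] x) := limsup_le_limsup_of_le htend
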